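/- Let X, Y be finite sets, Θ compact, p(x,y|θ) continuous in θ, and assume for every x there exists θ with p(x|θ)>0. For any predictive density q, if there exists π̂ ∈ P with D_q(π̂) = inf_{π∈P} D_q(π) and p_{π̂}(x) > 0 for all x ∈ X, then R(θ, p_{π̂}(·|·)) ≤ R(θ, q) for every θ ∈ Θ; i.e., the Bayesian predictive density based on π̂ dominates (weakly) q. -/

import Mathlib

open MeasureTheory

noncomputable def pMix {Θ X Y : Type*} [MeasurableSpace Θ]
    (p : X → Y → Θ → ℝ) (π : ProbabilityMeasure Θ) (x : X) (y : Y) : ℝ :=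
  ∫ θ, p x y θ ∂(π : Measure Θ)

def IsPredDensity {X Y : Type*} [Fintype Y] (q : X → Y → ℝ) : Prop :=
  (∀ x y, 0 ≤ q x y ∧ q x y ≤ 1) ∧ ∀ x, ∑ y : Y, q x y = 1

/-- `a log(b/c)` with conventions `0 log 0 = 0`, `0 log(c/0) = 0`, `a log(b/0) = +∞` (a > 0). -/
noncomputable def klTerm (a b c : ℝ) : EReal :=
  if a = 0 then 0 else if c = 0 then ⊤ else ((a * Real.log (b / c) : ℝ) : EReal)

/-- KL risk `R(θ,q) = Σ_{x,y} p(x,y|θ) log( p(y|x,θ)/q(y;x) )`. -/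
noncomputable def risk {Θ X Y : Type*} [Fintype X] [Fintype Y]
    (p : X → Y → Θ → ℝ) (q : X → Y → ℝ) (θ : Θ) : EReal :=
  ∑ x : X, ∑ y : Y, klTerm (p x y θ) (p x y θ / ∑ y' : Y, p x y' θ) (q x y)

/-- `D_q(π) = Σ_{x,y} p_π(x,y) log( p_π(x,y)/(q(y;x) p_π(x)) )`. -/
noncomputable def Dq {Θ X Y : Type*} [MeasurableSpace Θ] [Fintype X] [Fintype Y]
    (p : X → Y → Θ → ℝ) (q : X → Y → ℝ) (π : ProbabilityMeasure Θ) : EReal :=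
  ∑ x : X, ∑ y : Y,
    klTerm (pMix p π x y) (pMix p π x y) (q x y * ∑ y' : Y, pMix p π x y')

open Filter Set

lemma klTerm_ne_bot (a b c : ℝ) : klTerm a b c ≠ ⊥ := by
  unfold klTerm; split_ifs <;> simp [← EReal.coe_mul]

lemma klTerm_zero (b c : ℝ) : klTerm 0 b c = 0 := by simp [klTerm]

lemma klTerm_of_ne {a c : ℝ} (ha : a ≠ 0) (hc : c ≠ 0) (b : ℝ) :
    klTerm a b c = ((a * Real.log (b / c) : ℝ) : EReal) := by simp [klTerm, ha, hc]

lemma klTerm_top {a : ℝ} (ha : a ≠ 0) (b : ℝ) : klTerm a b 0 = ⊤ := by simp [klTerm, ha]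

lemma ereal_sum_ne_bot {ι : Type*} (s : Finset ι) (f : ι → EReal)
    (h : ∀ i ∈ s, f i ≠ ⊥) : ∑ i ∈ s, f i ≠ ⊥ := by
  classical
  induction s using Finset.cons_induction with
  | empty => simp
  | cons i s hi ih =>
    rw [Finset.sum_cons]
    simp only [ne_eq, EReal.add_eq_bot_iff, not_or]
    exact ⟨h i (Finset.mem_cons_self i s), ih fun j hj => h j (Finset.mem_cons_of_mem hj)⟩

lemma ereal_sum_eq_top {ι : Type*} (s : Finset ι) (f : ι → EReal)
    (h : ∀ i ∈ s, f i ≠ ⊥) {i : ι} (hi : i ∈ s) (ht : f i = ⊤) : ∑ j ∈ s, f j = ⊤ := by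
  classical
  rw [← Finset.add_sum_erase _ _ hi, ht]
  exact EReal.top_add_of_ne_bot (ereal_sum_ne_bot _ _ fun j hj => h j (Finset.mem_of_mem_erase hj))

lemma ereal_sum_ne_top {ι : Type*} (s : Finset ι) (f : ι → EReal)
    (h : ∀ i ∈ s, f i ≠ ⊤) : ∑ i ∈ s, f i ≠ ⊤ := by
  classical
  induction s using Finset.cons_induction with
  | empty => simp
  | cons i s hi ih =>
    rw [Finset.sum_cons]
    exact (EReal.add_lt_top (h i (Finset.mem_cons_self i s))
      (ih fun j hj => h j (Finset.mem_cons_of_mem hj))).ne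

lemma ereal_coe_sum {ι : Type*} (s : Finset ι) (f : ι → ℝ) :
    ((∑ i ∈ s, f i : ℝ) : EReal) = ∑ i ∈ s, ((f i : ℝ) : EReal) := by
  classical
  induction s using Finset.cons_induction with
  | empty => simp
  | cons i s hi ih => rw [Finset.sum_cons, Finset.sum_cons, EReal.coe_add, ih]

lemma sub_le_mul_log {a c : ℝ} (ha : 0 ≤ a) (hc : 0 ≤ c) (h : a = 0 ∨ 0 < c) :
    a - c ≤ a * Real.log (a / c) := by
  rcases eq_or_lt_of_le ha with rfl | ha'
  · simpa using hc
  · have hc' : 0 < c := h.resolve_left (ne_of_gt ha')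
    have h1 := Real.log_le_sub_one_of_pos (div_pos hc' ha')
    have h2 : Real.log (c / a) = -Real.log (a / c) := by
      rw [← Real.log_inv]; congr 1; field_simp
    rw [h2] at h1
    have h3 : a * (c / a) = c := by field_simp
    nlinarith [ha']

noncomputable def phiF (a aθ b bθ qv ε : ℝ) : ℝ :=
  ((1-ε)*a + ε*aθ) * Real.log (((1-ε)*a + ε*aθ) / (qv * ((1-ε)*b + ε*bθ)))

noncomputable def ellF (a aθ b bθ qv : ℝ) : ℝ :=
  (aθ - a) * Real.log (a / (qv * b)) + (aθ - a) - a * (bθ - b) / b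

lemma hasDerivAt_affine (c d t : ℝ) : HasDerivAt (fun ε : ℝ => (1-ε)*c + ε*d) (d - c) t := by
  have h : (fun ε : ℝ => (1-ε)*c + ε*d) = fun ε : ℝ => c + ε*(d-c) := by funext ε; ring
  rw [h]
  simpa using ((hasDerivAt_id t).mul_const (d-c)).const_add c

lemma phiF_hasDeriv {a aθ b bθ qv : ℝ} (ha : 0 < a) (hb : 0 < b) (hq : 0 < qv) :
    HasDerivAt (phiF a aθ b bθ qv) (ellF a aθ b bθ qv) 0 := by
  have hA : HasDerivAt (fun ε : ℝ => (1-ε)*a + ε*aθ) (aθ - a) 0 := hasDerivAt_affine a aθ 0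
  have hB : HasDerivAt (fun ε : ℝ => (1-ε)*b + ε*bθ) (bθ - b) 0 := hasDerivAt_affine b bθ 0
  have hA0 : (1-(0:ℝ))*a + 0*aθ = a := by ring
  have hB0 : (1-(0:ℝ))*b + 0*bθ = b := by ring
  have hlogA : HasDerivAt (fun ε : ℝ => Real.log ((1-ε)*a + ε*aθ)) (a⁻¹ * (aθ - a)) 0 := by
    have := (Real.hasDerivAt_log (x := (1-(0:ℝ))*a + 0*aθ) (by rw [hA0]; exact ha.ne')).comp 0 hA
    simpa [hA0, Function.comp_def] using this
  have hlogB : HasDerivAt (fun ε : ℝ => Real.log ((1-ε)*b + ε*bθ)) (b⁻¹ * (bθ - b)) 0 := by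
    have := (Real.hasDerivAt_log (x := (1-(0:ℝ))*b + 0*bθ) (by rw [hB0]; exact hb.ne')).comp 0 hB
    simpa [hB0, Function.comp_def] using this
  have hh : HasDerivAt (fun ε : ℝ => ((1-ε)*a + ε*aθ) *
      (Real.log ((1-ε)*a + ε*aθ) - Real.log qv - Real.log ((1-ε)*b + ε*bθ)))
      ((aθ - a) * (Real.log a - Real.log qv - Real.log b)
        + ((1-(0:ℝ))*a + 0*aθ) * (a⁻¹ * (aθ - a) - b⁻¹ * (bθ - b))) 0 := by
    have := hA.mul ((hlogA.sub_const (Real.log qv)).sub hlogB)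
    convert this using 1
    · rfl
    · rfl
    · rfl
    simp only [Pi.sub_apply]; rw [hA0, hB0]
  have heq : phiF a aθ b bθ qv =ᶠ[nhds 0] (fun ε : ℝ => ((1-ε)*a + ε*aθ) *
      (Real.log ((1-ε)*a + ε*aθ) - Real.log qv - Real.log ((1-ε)*b + ε*bθ))) := by
    have hAc : Continuous (fun ε : ℝ => (1-ε)*a + ε*aθ) := by continuity
    have hBc : Continuous (fun ε : ℝ => (1-ε)*b + ε*bθ) := by continuity
    have h1 : ∀ᶠ ε in nhds (0:ℝ), 0 < (1-ε)*a + ε*aθ := by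
      have := hAc.continuousAt (x := 0)
      exact this.eventually_mem (s := Set.Ioi 0) (by rw [hA0] at *; exact Ioi_mem_nhds ha) |>.mono
        fun ε hε => hε
    have h2 : ∀ᶠ ε in nhds (0:ℝ), 0 < (1-ε)*b + ε*bθ := by
      have := hBc.continuousAt (x := 0)
      exact this.eventually_mem (s := Set.Ioi 0) (by rw [hB0] at *; exact Ioi_mem_nhds hb) |>.mono
        fun ε hε => hε
    filter_upwards [h1, h2] with ε hε1 hε2
    unfold phiF
    rw [Real.log_div hε1.ne' (mul_ne_zero hq.ne' hε2.ne'), Real.log_mul hq.ne' hε2.ne']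
    ring
  have := hh.congr_of_eventuallyEq heq
  convert this using 1
  · rfl
  · rfl
  unfold ellF
  rw [Real.log_div ha.ne' (mul_ne_zero hq.ne' hb.ne'), Real.log_mul hq.ne' hb.ne']
  field_simp
  ring

/-- difference quotient at 0 tends to `ellF` when `a > 0` (or both zero, trivially). -/
lemma phiF_quot_tendsto {a aθ b bθ qv : ℝ} (ha : 0 < a) (hb : 0 < b) (hq : 0 < qv) :
    Tendsto (fun ε => (phiF a aθ b bθ qv ε - phiF a aθ b bθ qv 0) / ε)
      (nhdsWithin 0 (Set.Ioi 0)) (nhds (ellF a aθ b bθ qv)) := by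
  have h := (hasDerivAt_iff_tendsto_slope).mp (phiF_hasDeriv ha hb hq (aθ := aθ) (bθ := bθ))
  have h2 := h.mono_left (nhdsWithin_mono 0 (fun ε (hε : ε ∈ Set.Ioi 0) => ne_of_gt hε))
  refine h2.congr fun ε => ?_
  simp [slope_def_field, div_eq_inv_mul]

lemma phiF_quot_atBot {aθ b bθ qv : ℝ} (haθ : 0 < aθ) (hb : 0 < b) (hbθ : 0 ≤ bθ)
    (hq : 0 < qv) :
    Tendsto (fun ε => (phiF 0 aθ b bθ qv ε - phiF 0 aθ b bθ qv 0) / ε)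
      (nhdsWithin 0 (Set.Ioi 0)) atBot := by
  have h0 : phiF 0 aθ b bθ qv 0 = 0 := by simp [phiF]
  set u : ℝ → ℝ := fun ε => (ε * aθ) / (qv * ((1-ε)*b + ε*bθ)) with hu
  have hBc : Continuous (fun ε : ℝ => qv * ((1-ε)*b + ε*bθ)) := by continuity
  have hB0 : qv * ((1-(0:ℝ))*b + 0*bθ) = qv * b := by ring
  have hBev : ∀ᶠ ε in nhds (0:ℝ), 0 < qv * ((1-ε)*b + ε*bθ) := by
    have := hBc.continuousAt (x := 0)
    exact this.eventually_mem (s := Set.Ioi 0)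
      (by rw [hB0]; exact Ioi_mem_nhds (mul_pos hq hb)) |>.mono fun ε hε => hε
  -- u tendsto 0 within Ioi, and is eventually positive
  have huc : ContinuousAt u 0 := by
    apply ContinuousAt.div
    · fun_prop
    · exact hBc.continuousAt
    · rw [hB0]; exact (mul_pos hq hb).ne'
  have hu0 : u 0 = 0 := by simp [hu]
  have hut : Tendsto u (nhdsWithin 0 (Set.Ioi 0)) (nhds 0) := by
    have := huc.tendsto
    rw [hu0] at this
    exact this.mono_left nhdsWithin_le_nhds
  have hupos : ∀ᶠ ε in nhdsWithin (0:ℝ) (Set.Ioi 0), 0 < u ε := by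
    filter_upwards [hBev.filter_mono nhdsWithin_le_nhds, self_mem_nhdsWithin] with ε h1 h2
    exact div_pos (mul_pos h2 haθ) h1
  have hlog : Tendsto (fun ε => Real.log (u ε)) (nhdsWithin 0 (Set.Ioi 0)) atBot :=
    Real.tendsto_log_nhdsGT_zero.comp
      (tendsto_nhdsWithin_of_tendsto_nhds_of_eventually_within _ hut hupos)
  have hmain : Tendsto (fun ε => aθ * Real.log (u ε)) (nhdsWithin 0 (Set.Ioi 0)) atBot :=
    hlog.const_mul_atBot haθ
  refine hmain.congr' ?_
  filter_upwards [self_mem_nhdsWithin] with ε (hε : 0 < ε)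
  have : phiF 0 aθ b bθ qv ε = (ε * aθ) * Real.log (u ε) := by
    simp only [phiF, hu]
    ring_nf
  rw [this, h0]
  field_simp
  ring

lemma zero_pair_quot (b bθ qv : ℝ) :
    (fun ε => (phiF 0 0 b bθ qv ε - phiF 0 0 b bθ qv 0) / ε) = fun _ => (0:ℝ) := by
  funext ε; simp [phiF]



lemma main_ineq {X Y : Type*} [Fintype X] [Fintype Y]
    (a aθ q : X → Y → ℝ) (b bθ : X → ℝ)
    (hba : ∀ x, ∑ y, a x y = b x) (hbθa : ∀ x, ∑ y, aθ x y = bθ x)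
    (hann : ∀ x y, 0 ≤ a x y) (haθnn : ∀ x y, 0 ≤ aθ x y)
    (hbpos : ∀ x, 0 < b x)
    (hsa : ∑ x, b x = 1) (hsθ : ∑ x, bθ x = 1)
    (hqs : ∀ x, ∑ y, q x y = 1) (hqnn : ∀ x y, 0 ≤ q x y)
    (hqa : ∀ x y, 0 < a x y → 0 < q x y)
    (hAB : ∀ x y, 0 < aθ x y → 0 < a x y)
    (hkey : ∀ ε ∈ Icc (0:ℝ) (1/2),
      ∑ x, ∑ y, phiF (a x y) (aθ x y) (b x) (bθ x) (q x y) 0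
        ≤ ∑ x, ∑ y, phiF (a x y) (aθ x y) (b x) (bθ x) (q x y) ε) :
    0 ≤ ∑ x, ∑ y, aθ x y * Real.log (a x y / (q x y * b x)) := by
  classical
  set Q : X → Y → ℝ → ℝ := fun x y ε =>
    (phiF (a x y) (aθ x y) (b x) (bθ x) (q x y) ε
      - phiF (a x y) (aθ x y) (b x) (bθ x) (q x y) 0) / ε with hQ
  have hquot : ∀ᶠ ε in nhdsWithin (0:ℝ) (Set.Ioi 0), 0 ≤ ∑ x, ∑ y, Q x y ε := by
    filter_upwards [Ioc_mem_nhdsGT (by norm_num : (0:ℝ) < 1/2)] with ε hε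
    have h1 := hkey ε ⟨hε.1.le, hε.2⟩
    have h2 : ∑ x, ∑ y, Q x y ε =
        (∑ x, ∑ y, phiF (a x y) (aθ x y) (b x) (bθ x) (q x y) ε
          - ∑ x, ∑ y, phiF (a x y) (aθ x y) (b x) (bθ x) (q x y) 0) / ε := by
      simp only [hQ, div_eq_mul_inv, ← Finset.sum_mul, Finset.sum_sub_distrib]
    rw [h2]
    exact div_nonneg (sub_nonneg.2 h1) hε.1.le
  have htend : ∀ x y, Tendsto (Q x y) (nhdsWithin 0 (Set.Ioi 0))
      (nhds (ellF (a x y) (aθ x y) (b x) (bθ x) (q x y))) := by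
    intro x y
    rcases eq_or_lt_of_le (hann x y) with h0 | hpos
    · have h0' : a x y = 0 := h0.symm
      have hθ0 : aθ x y = 0 := by
        by_contra h
        exact absurd (hAB x y (lt_of_le_of_ne (haθnn x y) (Ne.symm h))) (by rw [h0']; simp)
      have h1 : Q x y = fun _ => (0:ℝ) := by
        simp only [hQ, h0', hθ0]
        exact zero_pair_quot _ _ _
      rw [h1]
      have h2 : ellF (a x y) (aθ x y) (b x) (bθ x) (q x y) = 0 := by
        simp [ellF, h0', hθ0]
      rw [h2]
      exact tendsto_const_nhds
    · exact phiF_quot_tendsto hpos (hbpos x) (hqa x y hpos)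
  have htendsum : Tendsto (fun ε => ∑ x, ∑ y, Q x y ε) (nhdsWithin 0 (Set.Ioi 0))
      (nhds (∑ x, ∑ y, ellF (a x y) (aθ x y) (b x) (bθ x) (q x y))) := by
    apply tendsto_finset_sum
    intro x _
    exact tendsto_finset_sum _ fun y _ => htend x y
  have hL : 0 ≤ ∑ x, ∑ y, ellF (a x y) (aθ x y) (b x) (bθ x) (q x y) :=
    ge_of_tendsto htendsum hquot
  -- now the algebra
  have hS2 : ∑ x, ∑ y, (aθ x y - a x y) = 0 := by
    simp only [Finset.sum_sub_distrib]
    rw [Finset.sum_congr rfl fun x _ => hbθa x, Finset.sum_congr rfl fun x _ => hba x,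
      hsθ, hsa]
    ring
  have hS3 : ∑ x, ∑ y, a x y * (bθ x - b x) / b x = 0 := by
    have e : ∀ x : X, ∑ y, a x y * (bθ x - b x) / b x = bθ x - b x := by
      intro x
      have h1 : ∑ y, a x y * (bθ x - b x) / b x = (∑ y, a x y) * ((bθ x - b x) / b x) := by
        rw [Finset.sum_mul]
        exact Finset.sum_congr rfl fun y _ => by rw [mul_div_assoc]
      rw [h1, hba x, mul_div_assoc', mul_comm, mul_div_assoc, div_self (hbpos x).ne', mul_one]
    rw [Finset.sum_congr rfl fun x _ => e x, Finset.sum_sub_distrib, hsθ, hsa]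
    ring
  have hsplit : ∑ x, ∑ y, ellF (a x y) (aθ x y) (b x) (bθ x) (q x y)
      = (∑ x, ∑ y, (aθ x y - a x y) * Real.log (a x y / (q x y * b x)))
        + (∑ x, ∑ y, (aθ x y - a x y)) - (∑ x, ∑ y, a x y * (bθ x - b x) / b x) := by
    simp only [ellF, Finset.sum_add_distrib, Finset.sum_sub_distrib]
  have hS1 : 0 ≤ ∑ x, ∑ y, (aθ x y - a x y) * Real.log (a x y / (q x y * b x)) := by
    rw [hsplit, hS2, hS3] at hL
    linarith
  have hD : 0 ≤ ∑ x, ∑ y, a x y * Real.log (a x y / (q x y * b x)) := by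
    apply Finset.sum_nonneg; intro x _
    have hpoint : ∀ y, a x y - q x y * b x ≤ a x y * Real.log (a x y / (q x y * b x)) := by
      intro y
      apply sub_le_mul_log (hann x y) (mul_nonneg (hqnn x y) (hbpos x).le)
      rcases eq_or_lt_of_le (hann x y) with h | h
      · exact Or.inl h.symm
      · exact Or.inr (mul_pos (hqa x y h) (hbpos x))
    calc (0:ℝ) = ∑ y, (a x y - q x y * b x) := by
          rw [Finset.sum_sub_distrib, hba x, ← Finset.sum_mul, hqs x]; ring
      _ ≤ _ := Finset.sum_le_sum fun y _ => hpoint y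
  have hexpand : ∑ x, ∑ y, (aθ x y - a x y) * Real.log (a x y / (q x y * b x))
      = (∑ x, ∑ y, aθ x y * Real.log (a x y / (q x y * b x)))
        - ∑ x, ∑ y, a x y * Real.log (a x y / (q x y * b x)) := by
    simp only [sub_mul, Finset.sum_sub_distrib]
  rw [hexpand] at hS1
  linarith

lemma caseA_contra {X Y : Type*} [Fintype X] [Fintype Y]
    (a aθ q : X → Y → ℝ) (b bθ : X → ℝ)
    (hann : ∀ x y, 0 ≤ a x y) (haθnn : ∀ x y, 0 ≤ aθ x y)
    (hbθnn : ∀ x, 0 ≤ bθ x) (hbpos : ∀ x, 0 < b x)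
    (hqa : ∀ x y, 0 < a x y → 0 < q x y)
    (hq0 : ∀ x y, 0 < aθ x y → 0 < q x y)
    {x0 : X} {y0 : Y} (ha0 : a x0 y0 = 0) (haθ0 : 0 < aθ x0 y0)
    (hkey : ∀ ε ∈ Icc (0:ℝ) (1/2),
      ∑ x, ∑ y, phiF (a x y) (aθ x y) (b x) (bθ x) (q x y) 0
        ≤ ∑ x, ∑ y, phiF (a x y) (aθ x y) (b x) (bθ x) (q x y) ε) : False := by
  classical
  set Q : X → Y → ℝ → ℝ := fun x y ε =>
    (phiF (a x y) (aθ x y) (b x) (bθ x) (q x y) ε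
      - phiF (a x y) (aθ x y) (b x) (bθ x) (q x y) 0) / ε with hQ
  have hquot : ∀ᶠ ε in nhdsWithin (0:ℝ) (Set.Ioi 0), 0 ≤ ∑ x, ∑ y, Q x y ε := by
    filter_upwards [Ioc_mem_nhdsGT (by norm_num : (0:ℝ) < 1/2)] with ε hε
    have h1 := hkey ε ⟨hε.1.le, hε.2⟩
    have h2 : ∑ x, ∑ y, Q x y ε =
        (∑ x, ∑ y, phiF (a x y) (aθ x y) (b x) (bθ x) (q x y) ε
          - ∑ x, ∑ y, phiF (a x y) (aθ x y) (b x) (bθ x) (q x y) 0) / ε := by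
      simp only [hQ, div_eq_mul_inv, ← Finset.sum_mul, Finset.sum_sub_distrib]
    rw [h2]
    exact div_nonneg (sub_nonneg.2 h1) hε.1.le
  have hbound : ∀ z : X × Y, ∃ M : ℝ, ∀ᶠ ε in nhdsWithin (0:ℝ) (Set.Ioi 0), Q z.1 z.2 ε ≤ M := by
    rintro ⟨x, y⟩
    rcases eq_or_lt_of_le (hann x y) with h0 | hpos
    · rcases eq_or_lt_of_le (haθnn x y) with hθ0 | hθpos
      · refine ⟨0, Eventually.of_forall fun ε => ?_⟩
        have h1 : Q x y = fun _ => (0:ℝ) := by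
          simp only [hQ, ← h0, ← hθ0]
          exact zero_pair_quot _ _ _
        rw [h1]
      · have h := phiF_quot_atBot hθpos (hbpos x) (hbθnn x) (hq0 x y hθpos)
        refine ⟨0, ?_⟩
        have h1 : Tendsto (Q x y) (nhdsWithin (0:ℝ) (Set.Ioi 0)) atBot := by
          simp only [hQ, ← h0]
          exact h
        exact h1.eventually_le_atBot 0
    · have h := phiF_quot_tendsto (aθ := aθ x y) (bθ := bθ x) hpos (hbpos x) (hqa x y hpos)
      refine ⟨ellF (a x y) (aθ x y) (b x) (bθ x) (q x y) + 1, ?_⟩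
      exact h.eventually (eventually_le_nhds (lt_add_one _))
  choose M hM using hbound
  set K : ℝ := ∑ z : X × Y, |M z| with hK
  have hall : ∀ᶠ ε in nhdsWithin (0:ℝ) (Set.Ioi 0), ∀ z : X × Y, Q z.1 z.2 ε ≤ M z :=
    eventually_all.2 hM
  have hbadT : Tendsto (Q x0 y0) (nhdsWithin (0:ℝ) (Set.Ioi 0)) atBot := by
    have h := phiF_quot_atBot haθ0 (hbpos x0) (hbθnn x0) (hq0 x0 y0 haθ0)
    simp only [hQ, ha0]
    exact h
  have hbadlt : ∀ᶠ ε in nhdsWithin (0:ℝ) (Set.Ioi 0), Q x0 y0 ε < -K - 1 :=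
    hbadT.eventually (eventually_lt_atBot _)
  obtain ⟨ε, h1, h2, h3⟩ := (hquot.and (hall.and hbadlt)).exists
  have hsum : ∑ x, ∑ y, Q x y ε = ∑ z : X × Y, Q z.1 z.2 ε :=
    (Fintype.sum_prod_type (f := fun z : X × Y => Q z.1 z.2 ε)).symm
  have hsplit : ∑ z : X × Y, Q z.1 z.2 ε
      = Q x0 y0 ε + ∑ z ∈ Finset.univ.erase (x0, y0), Q z.1 z.2 ε := by
    rw [Finset.add_sum_erase _ (fun z : X × Y => Q z.1 z.2 ε) (Finset.mem_univ (x0, y0))]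
  have hrest : ∑ z ∈ Finset.univ.erase (x0, y0), Q z.1 z.2 ε ≤ K := by
    calc ∑ z ∈ Finset.univ.erase (x0, y0), Q z.1 z.2 ε
        ≤ ∑ z ∈ Finset.univ.erase (x0, y0), M z := Finset.sum_le_sum fun z _ => h2 z
      _ ≤ ∑ z ∈ Finset.univ.erase (x0, y0), |M z| := Finset.sum_le_sum fun z _ => le_abs_self _
      _ ≤ K := Finset.sum_le_sum_of_subset_of_nonneg (Finset.subset_univ _)
          (fun z _ _ => abs_nonneg _)
  rw [hsum, hsplit] at h1
  have := h3
  linarith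

/-- Theorem 1, part 2 -/
theorem Dq_minimizer_dominates
    {Θ X Y : Type*} [MetricSpace Θ] [CompactSpace Θ] [MeasurableSpace Θ] [BorelSpace Θ]
    [Fintype X] [Fintype Y]
    (p : X → Y → Θ → ℝ)
    (hc : ∀ x y, Continuous (p x y))
    (hnn : ∀ x y θ, 0 ≤ p x y θ)
    (hsum : ∀ θ : Θ, ∑ x : X, ∑ y : Y, p x y θ = 1)
    (hx : ∀ x : X, ∃ θ : Θ, 0 < ∑ y : Y, p x y θ)
    (q : X → Y → ℝ) (hq : IsPredDensity q)
    (πhat : ProbabilityMeasure Θ)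
    (hminDq : ∀ π : ProbabilityMeasure Θ, Dq p q πhat ≤ Dq p q π)
    (hpos : ∀ x : X, 0 < ∑ y : Y, pMix p πhat x y) :
    ∀ θ : Θ,
      risk p (fun x y => pMix p πhat x y / ∑ y' : Y, pMix p πhat x y') θ
        ≤ risk p q θ := by
  classical
  intro θ0
  by_cases hRq : risk p q θ0 = ⊤
  · rw [hRq]; exact le_top
  -- basic nonnegativity
  have hann : ∀ x y, 0 ≤ pMix p πhat x y := fun x y => integral_nonneg fun θ => hnn x y θ
  have hq0 : ∀ x y, 0 < p x y θ0 → 0 < q x y := by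
    intro x y hxy
    rcases (hq.1 x y).1.eq_or_lt with h | h
    · exfalso; apply hRq
      unfold risk
      refine ereal_sum_eq_top _ _ (fun i _ => ereal_sum_ne_bot _ _ fun j _ => klTerm_ne_bot _ _ _)
        (Finset.mem_univ x) ?_
      refine ereal_sum_eq_top _ _ (fun j _ => klTerm_ne_bot _ _ _) (Finset.mem_univ y) ?_
      rw [← h]
      exact klTerm_top (ne_of_gt hxy) _
    · exact h
  -- integrability
  have hInt : ∀ (x : X) (y : Y) (μ : Measure Θ), IsFiniteMeasure μ → Integrable (p x y) μ := by
    intro x y μ _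
    obtain ⟨C, hC⟩ := isCompact_univ.exists_bound_of_continuousOn (hc x y).continuousOn
    exact (integrable_const C).mono' (hc x y).aestronglyMeasurable
      (ae_of_all _ fun θ => hC θ (Set.mem_univ θ))
  have hIntπ : ∀ x y, Integrable (p x y) (πhat : Measure Θ) := fun x y => hInt x y _ inferInstance
  have hsum_a : ∑ x : X, ∑ y : Y, pMix p πhat x y = 1 := by
    have h1 : ∑ x : X, ∑ y : Y, pMix p πhat x y
        = ∫ θ, ∑ x : X, ∑ y : Y, p x y θ ∂(πhat : Measure Θ) := by
      rw [integral_finset_sum _ fun x _ => integrable_finset_sum _ fun y _ => hIntπ x y]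
      refine Finset.sum_congr rfl fun x _ => ?_
      rw [integral_finset_sum _ fun y _ => hIntπ x y]
      rfl
    rw [h1]
    simp only [hsum]
    simp
  -- the mixture construction
  have hmix : ∀ ε : ℝ, 0 ≤ ε → ε ≤ 1 →
      ∃ π : ProbabilityMeasure Θ, ∀ x y,
        pMix p π x y = (1 - ε) * pMix p πhat x y + ε * p x y θ0 := by
    intro ε h0 h1
    have h1' : 0 ≤ 1 - ε := by linarith
    set μ : Measure Θ := ENNReal.ofReal (1-ε) • (πhat : Measure Θ)
      + ENNReal.ofReal ε • Measure.dirac θ0 with hμ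
    have hone : ENNReal.ofReal (1-ε) + ENNReal.ofReal ε = 1 := by
      rw [← ENNReal.ofReal_add h1' h0]
      norm_num
    have hprob : IsProbabilityMeasure μ := by
      constructor
      rw [hμ]
      simp [Measure.add_apply, Measure.smul_apply, smul_eq_mul, measure_univ, hone]
    refine ⟨⟨μ, hprob⟩, fun x y => ?_⟩
    show ∫ θ, p x y θ ∂μ = _
    have hi1 : Integrable (p x y) (ENNReal.ofReal (1-ε) • (πhat : Measure Θ)) :=
      (hIntπ x y).smul_measure ENNReal.ofReal_ne_top
    have hi2 : Integrable (p x y) (ENNReal.ofReal ε • Measure.dirac θ0) :=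
      (hInt x y (Measure.dirac θ0) inferInstance).smul_measure ENNReal.ofReal_ne_top
    rw [hμ, integral_add_measure hi1 hi2, integral_smul_measure, integral_smul_measure,
      integral_dirac, ENNReal.toReal_ofReal h1', ENNReal.toReal_ofReal h0]
    simp [smul_eq_mul, pMix]
  -- Dq πhat is finite, hence q is positive wherever the Bayes joint density is
  obtain ⟨πδ, hπδ⟩ := hmix 1 zero_le_one le_rfl
  have hDδ : Dq p q πδ ≠ ⊤ := by
    unfold Dq
    apply ereal_sum_ne_top; intro x _
    apply ereal_sum_ne_top; intro y _
    have hA : pMix p πδ x y = p x y θ0 := by rw [hπδ]; ring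
    have hB : ∑ y' : Y, pMix p πδ x y' = ∑ y' : Y, p x y' θ0 :=
      Finset.sum_congr rfl fun y' _ => by rw [hπδ]; ring
    rw [hA, hB]
    rcases eq_or_lt_of_le (hnn x y θ0) with h0 | hpos'
    · rw [← h0, klTerm_zero]; simp
    · have hbθ : 0 < ∑ y' : Y, p x y' θ0 :=
        lt_of_lt_of_le hpos' (Finset.single_le_sum (fun y' _ => hnn x y' θ0) (Finset.mem_univ y))
      rw [klTerm_of_ne (ne_of_gt hpos') (ne_of_gt (mul_pos (hq0 x y hpos') hbθ))]
      exact EReal.coe_ne_top _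
  have hDhat : Dq p q πhat ≠ ⊤ := fun h => hDδ (top_le_iff.mp (h ▸ hminDq πδ))
  have hqa : ∀ x y, 0 < pMix p πhat x y → 0 < q x y := by
    intro x y hxy
    rcases (hq.1 x y).1.eq_or_lt with h | h
    · exfalso; apply hDhat
      unfold Dq
      refine ereal_sum_eq_top _ _ (fun i _ => ereal_sum_ne_bot _ _ fun j _ => klTerm_ne_bot _ _ _)
        (Finset.mem_univ x) ?_
      refine ereal_sum_eq_top _ _ (fun j _ => klTerm_ne_bot _ _ _) (Finset.mem_univ y) ?_
      have hz : q x y * ∑ y' : Y, pMix p πhat x y' = 0 := by rw [← h]; ring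
      rw [hz]
      exact klTerm_top (ne_of_gt hxy) _
    · exact h
  -- Dq of a mixture, as a real number
  have hDqcoe : ∀ (π : ProbabilityMeasure Θ) (ε : ℝ), 0 ≤ ε → ε ≤ 1/2 →
      (∀ x y, pMix p π x y = (1-ε) * pMix p πhat x y + ε * p x y θ0) →
      Dq p q π = ((∑ x : X, ∑ y : Y, phiF (pMix p πhat x y) (p x y θ0)
        (∑ y' : Y, pMix p πhat x y') (∑ y' : Y, p x y' θ0) (q x y) ε : ℝ) : EReal) := by
    intro π ε hε0 hε2 hπ
    unfold Dq
    rw [ereal_coe_sum]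
    refine Finset.sum_congr rfl fun x _ => ?_
    rw [ereal_coe_sum]
    refine Finset.sum_congr rfl fun y _ => ?_
    have hBx : ∑ y' : Y, pMix p π x y'
        = (1-ε) * (∑ y' : Y, pMix p πhat x y') + ε * (∑ y' : Y, p x y' θ0) := by
      rw [Finset.sum_congr rfl fun y' (_ : y' ∈ Finset.univ) => hπ x y',
        Finset.sum_add_distrib, ← Finset.mul_sum, ← Finset.mul_sum]
    rw [hπ x y, hBx]
    by_cases hA0 : (1-ε) * pMix p πhat x y + ε * p x y θ0 = 0
    · rw [hA0, klTerm_zero]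
      unfold phiF
      rw [hA0]
      simp
    · have hAnn : 0 ≤ (1-ε) * pMix p πhat x y + ε * p x y θ0 := by
        have := hann x y; have := hnn x y θ0; nlinarith
      have hApos := lt_of_le_of_ne hAnn (Ne.symm hA0)
      have hqpos : 0 < q x y := by
        rcases eq_or_lt_of_le (hann x y) with h | h
        · refine hq0 x y ?_
          rcases eq_or_lt_of_le (hnn x y θ0) with h2 | h2
          · exfalso; apply hA0; rw [← h, ← h2]; ring
          · exact h2
        · exact hqa x y h
      have hBpos : 0 < (1-ε) * (∑ y' : Y, pMix p πhat x y') + ε * (∑ y' : Y, p x y' θ0) := by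
        have h1 := hpos x
        have h2 : 0 ≤ ∑ y' : Y, p x y' θ0 := Finset.sum_nonneg fun y' _ => hnn x y' θ0
        nlinarith
      rw [klTerm_of_ne (ne_of_gt hApos) (ne_of_gt (mul_pos hqpos hBpos))]
      rfl
  -- key inequality from minimality
  have hkey : ∀ ε ∈ Set.Icc (0:ℝ) (1/2),
      ∑ x : X, ∑ y : Y, phiF (pMix p πhat x y) (p x y θ0)
        (∑ y' : Y, pMix p πhat x y') (∑ y' : Y, p x y' θ0) (q x y) 0
      ≤ ∑ x : X, ∑ y : Y, phiF (pMix p πhat x y) (p x y θ0)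
        (∑ y' : Y, pMix p πhat x y') (∑ y' : Y, p x y' θ0) (q x y) ε := by
    intro ε hε
    obtain ⟨π, hπ⟩ := hmix ε hε.1 (by linarith [hε.2])
    have h1 := hDqcoe π ε hε.1 hε.2 hπ
    have h0 := hDqcoe πhat 0 le_rfl (by norm_num) (fun x y => by ring)
    have h2 := hminDq π
    rw [h0, h1] at h2
    exact_mod_cast h2
  -- case analysis
  by_cases hAB : ∀ x y, 0 < p x y θ0 → 0 < pMix p πhat x y
  · -- main case: apply main_ineq
    have hT := main_ineq (pMix p πhat) (fun x y => p x y θ0) q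
      (fun x => ∑ y' : Y, pMix p πhat x y') (fun x => ∑ y' : Y, p x y' θ0)
      (fun x => rfl) (fun x => rfl) hann (fun x y => hnn x y θ0) hpos
      hsum_a (hsum θ0) hq.2 (fun x y => (hq.1 x y).1) hqa hAB hkey
    -- both risks as real numbers
    have hriskq : risk p q θ0 = ((∑ x : X, ∑ y : Y, p x y θ0 *
        Real.log ((p x y θ0 / ∑ y' : Y, p x y' θ0) / q x y) : ℝ) : EReal) := by
      unfold risk
      rw [ereal_coe_sum]
      refine Finset.sum_congr rfl fun x _ => ?_
      rw [ereal_coe_sum]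
      refine Finset.sum_congr rfl fun y _ => ?_
      rcases eq_or_lt_of_le (hnn x y θ0) with h0 | hpos'
      · rw [← h0, klTerm_zero]; simp
      · rw [klTerm_of_ne (ne_of_gt hpos') (ne_of_gt (hq0 x y hpos'))]
    have hriskhat : risk p (fun x y => pMix p πhat x y / ∑ y' : Y, pMix p πhat x y') θ0
        = ((∑ x : X, ∑ y : Y, p x y θ0 *
          Real.log ((p x y θ0 / ∑ y' : Y, p x y' θ0)
            / (pMix p πhat x y / ∑ y' : Y, pMix p πhat x y')) : ℝ) : EReal) := by
      unfold risk
      rw [ereal_coe_sum]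
      refine Finset.sum_congr rfl fun x _ => ?_
      rw [ereal_coe_sum]
      refine Finset.sum_congr rfl fun y _ => ?_
      rcases eq_or_lt_of_le (hnn x y θ0) with h0 | hpos'
      · rw [← h0, klTerm_zero]; simp
      · have hax : 0 < pMix p πhat x y := hAB x y hpos'
        have hqhat : 0 < pMix p πhat x y / ∑ y' : Y, pMix p πhat x y' :=
          div_pos hax (hpos x)
        rw [klTerm_of_ne (ne_of_gt hpos') (ne_of_gt hqhat)]
    rw [hriskq, hriskhat, EReal.coe_le_coe_iff]
    -- the real inequality
    have hdiff : ∀ x y,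
        p x y θ0 * Real.log ((p x y θ0 / ∑ y' : Y, p x y' θ0) / q x y)
        - p x y θ0 * Real.log ((p x y θ0 / ∑ y' : Y, p x y' θ0)
            / (pMix p πhat x y / ∑ y' : Y, pMix p πhat x y'))
        = p x y θ0 * Real.log (pMix p πhat x y / (q x y * ∑ y' : Y, pMix p πhat x y')) := by
      intro x y
      rcases eq_or_lt_of_le (hnn x y θ0) with h0 | hpos'
      · rw [← h0]; ring
      · have hax : 0 < pMix p πhat x y := hAB x y hpos'
        have hbx : 0 < ∑ y' : Y, pMix p πhat x y' := hpos x
        have hbθx : 0 < ∑ y' : Y, p x y' θ0 :=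
          lt_of_lt_of_le hpos' (Finset.single_le_sum (fun y' _ => hnn x y' θ0) (Finset.mem_univ y))
        have hqx : 0 < q x y := hq0 x y hpos'
        have h1 : 0 < (p x y θ0 / ∑ y' : Y, p x y' θ0) / q x y :=
          div_pos (div_pos hpos' hbθx) hqx
        have h2 : 0 < (p x y θ0 / ∑ y' : Y, p x y' θ0)
            / (pMix p πhat x y / ∑ y' : Y, pMix p πhat x y') :=
          div_pos (div_pos hpos' hbθx) (div_pos hax hbx)
        rw [← mul_sub, ← Real.log_div (ne_of_gt h1) (ne_of_gt h2)]
        congr 2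
        field_simp
    have hsub : (∑ x : X, ∑ y : Y, p x y θ0 *
          Real.log ((p x y θ0 / ∑ y' : Y, p x y' θ0) / q x y))
        - (∑ x : X, ∑ y : Y, p x y θ0 *
          Real.log ((p x y θ0 / ∑ y' : Y, p x y' θ0)
            / (pMix p πhat x y / ∑ y' : Y, pMix p πhat x y')))
        = ∑ x : X, ∑ y : Y, p x y θ0 *
            Real.log (pMix p πhat x y / (q x y * ∑ y' : Y, pMix p πhat x y')) := by
      simp only [← Finset.sum_sub_distrib]
      exact Finset.sum_congr rfl fun x _ => Finset.sum_congr rfl fun y _ => hdiff x y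
    linarith [hT, hsub.ge, hsub.le]
  · -- degenerate case: contradiction
    exfalso
    push_neg at hAB
    obtain ⟨x0, y0, hθpos, hle⟩ := hAB
    have ha0 : pMix p πhat x0 y0 = 0 := le_antisymm hle (hann x0 y0)
    exact caseA_contra (pMix p πhat) (fun x y => p x y θ0) q
      (fun x => ∑ y' : Y, pMix p πhat x y') (fun x => ∑ y' : Y, p x y' θ0)
      hann (fun x y => hnn x y θ0)
      (fun x => Finset.sum_nonneg fun y' _ => hnn x y' θ0) hpos hqa hq0 ha0 hθpos hkey
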